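/- Let t_n, t be convex functions on ℝ with t_n → t pointwise, t finite at 0 with t(0) = d ≥ 0, and suppose sup dom(t) = +∞. Suppose there exist ε > 0 and infinitely many n such that t_n is differentiable on ℝ with inf{-t_n'(x) : x ∈ ℝ} < α₋ - ε, where α₋ := inf{-t⁻(x) : x ∈ Int(dom t)}. If moreover the Legendre-transform values -t_n*(-α) are nonnegative for all α in the range of -t_n', then a contradiction arises; equivalently: if t_n → t pointwise, sup dom(t) = +∞, t(0) < ∞, and -t_n*(-α) ≥ 0 whenever α ∈ (α₋ⁿ, α₊ⁿ), then liminf_n α₋ⁿ ≥ α₋. -/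

import Mathlib

open Filter Topology

/-- The effective domain of an `EReal`-valued function on `ℝ`. -/
def edom (g : ℝ → EReal) : Set ℝ := {x | g x ≠ ⊤}

/-- Convexity for `EReal`-valued functions on `ℝ`. -/
def Cvx (g : ℝ → EReal) : Prop :=
  ∀ x y a b : ℝ, 0 ≤ a → 0 ≤ b → a + b = 1 →
    g (a * x + b * y) ≤ (a : EReal) * g x + (b : EReal) * g y

/-- The Legendre conjugate `g*(α) = sup_x (α x - g x)` of an `EReal`-valued function. -/
noncomputable def conjE (g : ℝ → EReal) (α : ℝ) : EReal :=
  ⨆ x : ℝ, ((α * x : ℝ) : EReal) - g x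

/-- The left derivative `g⁻(x)`, as the supremum of slopes from the left. -/
noncomputable def leftD (g : ℝ → EReal) (x : ℝ) : ℝ :=
  sSup {r : ℝ | ∃ y < x, ((r * (x - y) : ℝ) : EReal) ≤ g x - g y}

/-- The right derivative `g⁺(x)`, as the infimum of slopes from the right. -/
noncomputable def rightD (g : ℝ → EReal) (x : ℝ) : ℝ :=
  sInf {r : ℝ | ∃ y > x, g y - g x ≤ ((r * (y - x) : ℝ) : EReal)}

lemma cvx_slope {t : ℝ → EReal} (hconv : Cvx t) {y x z ry rx rz : ℝ}
    (hyx : y < x) (hxz : x < z) (hy : t y = (ry:ℝ)) (hx : t x = (rx:ℝ)) (hz : t z = (rz:ℝ)) :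
    (rx - ry) * (z - x) ≤ (rz - rx) * (x - y) := by
  have hzy : (0:ℝ) < z - y := by linarith
  set a := (z - x)/(z - y) with ha'
  set b := (x - y)/(z - y) with hb'
  have ha : 0 ≤ a := div_nonneg (by linarith) hzy.le
  have hb : 0 ≤ b := div_nonneg (by linarith) hzy.le
  have hab : a + b = 1 := by rw [ha', hb', ← add_div, div_eq_one_iff_eq hzy.ne']; ring
  have hx' : a * y + b * z = x := by rw [ha', hb']; field_simp; ring
  have h := hconv y z a b ha hb hab
  rw [hx', hy, hx, hz, ← EReal.coe_mul, ← EReal.coe_mul, ← EReal.coe_add] at h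
  have h2 : rx ≤ a*ry + b*rz := EReal.coe_le_coe_iff.1 h
  have h3 : a * (z - y) = z - x := div_mul_cancel₀ _ hzy.ne'
  have h4 : b * (z - y) = x - y := div_mul_cancel₀ _ hzy.ne'
  have h5 : (a*ry + b*rz)*(z-y) = ry*(a*(z-y)) + rz*(b*(z-y)) := by ring
  rw [h3, h4] at h5
  nlinarith [mul_le_mul_of_nonneg_right h2 hzy.le, h5]

lemma freq_le_limit {f g : ℕ → ℝ} {F G : ℝ} (hf : Tendsto f atTop (nhds F))
    (hg : Tendsto g atTop (nhds G)) (h : ∃ᶠ n in atTop, g n ≤ f n) : G ≤ F := by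
  by_contra hlt
  push_neg at hlt
  have h1 : ∀ᶠ n in atTop, f n < (F+G)/2 := hf.eventually_lt_const (by linarith)
  have h2 : ∀ᶠ n in atTop, (F+G)/2 < g n := hg.eventually_const_lt (by linarith)
  rcases (h.and_eventually (h1.and h2)).exists with ⟨n, h3, h4, h5⟩
  linarith

/-- Boundary estimate from the proof of Theorem 1.8: let `t_n : ℝ → ℝ` be finite
differentiable convex functions converging pointwise to the proper convex function
`t : ℝ → ℝ ∪ {∞}`, with `sup dom(t) = +∞` and `t(0) < ∞`. If moreover
`-t_n*(-α) ≥ 0` whenever `α ∈ (α₋ⁿ, α₊ⁿ)` (with `α₋ⁿ = inf {-t_n'(x)}`,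
`α₊ⁿ = sup {-t_n'(x)}`), then `liminf_n α₋ⁿ ≥ α₋`, where
`α₋ = inf {-t⁻(x) : x ∈ Int(dom t)}`. -/
theorem liminf_alpha_minus_ge (tn : ℕ → ℝ → ℝ) (t : ℝ → EReal)
    (hconvn : ∀ n, ConvexOn ℝ Set.univ (tn n)) (hdiffn : ∀ n, Differentiable ℝ (tn n))
    (hconv : Cvx t) (hbot : ∀ x, ⊥ < t x)
    (hlim : ∀ β : ℝ, Tendsto (fun n => ((tn n β : ℝ) : EReal)) atTop (nhds (t β)))
    (hdom : ∀ M : ℝ, ∃ β > M, t β ≠ ⊤)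
    (h0 : t 0 ≠ ⊤)
    (hpos : ∀ n : ℕ, ∀ α : ℝ,
      (⨅ x : ℝ, ((-(deriv (tn n) x) : ℝ) : EReal)) < (α : EReal) →
      (α : EReal) < (⨆ x : ℝ, ((-(deriv (tn n) x) : ℝ) : EReal)) →
      conjE (fun x => ((tn n x : ℝ) : EReal)) (-α) ≤ 0) :
    (⨅ x ∈ interior (edom t), ((-leftD t x : ℝ) : EReal)) ≤
      Filter.atTop.liminf (fun n => ⨅ x : ℝ, ((-(deriv (tn n) x) : ℝ) : EReal)) := by
  -- Step A: t is finite on [0,∞)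
  have hfin : ∀ β : ℝ, 0 ≤ β → t β ≠ ⊤ := by
    intro β hβ
    rcases hdom β with ⟨z, hzβ, hz⟩
    have hz0 : 0 < z := lt_of_le_of_lt hβ hzβ
    rcases eq_or_lt_of_le hβ with h | hβ'
    · rwa [← h]
    · have h0r := (EReal.coe_toReal h0 (hbot 0).ne').symm
      have hzr := (EReal.coe_toReal hz (hbot z).ne').symm
      have ha : (0:ℝ) ≤ (z - β)/z := div_nonneg (by linarith) hz0.le
      have hb : (0:ℝ) ≤ β/z := div_nonneg hβ hz0.le
      have hab : (z - β)/z + β/z = 1 := by field_simp; ring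
      have h := hconv 0 z _ _ ha hb hab
      rw [mul_zero, zero_add, div_mul_cancel₀ _ hz0.ne', h0r, hzr,
        ← EReal.coe_mul, ← EReal.coe_mul, ← EReal.coe_add] at h
      exact ne_top_of_le_ne_top (EReal.coe_ne_top _) h
  have hreal : ∀ β : ℝ, 0 ≤ β → t β = (((t β).toReal : ℝ) : EReal) :=
    fun β hβ => (EReal.coe_toReal (hfin β hβ) (hbot β).ne').symm
  -- Step B
  have hint : Set.Ioi (0:ℝ) ⊆ interior (edom t) := by
    rw [← interior_Ici]
    exact interior_mono fun β hβ => hfin β hβ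
  -- Step D: slope lower bound for leftD
  have hD : ∀ x : ℝ, 0 < x → ((t x).toReal - (t 0).toReal)/x ≤ leftD t x := by
    intro x hx
    have hxr := hreal x hx.le
    have h0r := hreal 0 le_rfl
    have hzr := hreal (x+1) (by linarith)
    have hmem : ((t x).toReal - (t 0).toReal)/x ∈
        {r : ℝ | ∃ y < x, ((r * (x - y) : ℝ) : EReal) ≤ t x - t y} := by
      refine ⟨0, hx, ?_⟩
      rw [hxr, h0r, ← EReal.coe_sub, EReal.coe_le_coe_iff, sub_zero,
        div_mul_cancel₀ _ hx.ne']
      simp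
    have hbdd : BddAbove {r : ℝ | ∃ y < x, ((r * (x - y) : ℝ) : EReal) ≤ t x - t y} := by
      refine ⟨(t (x+1)).toReal - (t x).toReal, fun r hr => ?_⟩
      obtain ⟨y, hy, hle⟩ := hr
      have hyfin : t y ≠ ⊤ := by
        intro hy'
        rw [hy', EReal.sub_top] at hle
        exact (EReal.coe_ne_bot _) (le_bot_iff.1 hle)
      have hyr := (EReal.coe_toReal hyfin (hbot y).ne').symm
      rw [hxr, hyr, ← EReal.coe_sub, EReal.coe_le_coe_iff] at hle
      have hsl := cvx_slope hconv hy (lt_add_one x) hyr hxr hzr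
      nlinarith [hle, hsl, hy]
    exact le_csSup hbdd hmem
  -- main argument
  rw [← EReal.le_of_forall_lt_iff_le]
  intro α hα
  have hfreq : ∃ᶠ n in atTop,
      (⨅ x : ℝ, ((-(deriv (tn n) x) : ℝ) : EReal)) < (α : EReal) :=
    frequently_lt_of_liminf_lt (by isBoundedDefault) hα
  have hkey : ∃ᶠ n in atTop, ∀ β : ℝ, 0 ≤ β → min 0 (tn n 0) - α * β ≤ tn n β := by
    refine hfreq.mono fun n hn β hβ => ?_
    by_cases hc : (α : EReal) < ⨆ x : ℝ, ((-(deriv (tn n) x) : ℝ) : EReal)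
    · have hcj := hpos n α hn hc
      unfold conjE at hcj
      have h2 : ((-α * β : ℝ) : EReal) - ((tn n β : ℝ) : EReal) ≤ 0 :=
        le_trans (le_iSup (fun x => ((-α * x : ℝ) : EReal) - ((tn n x : ℝ) : EReal)) β) hcj
      rw [← EReal.coe_sub] at h2
      have h3 : -α * β - tn n β ≤ 0 := by exact_mod_cast h2
      have h4 := min_le_left 0 (tn n 0)
      nlinarith
    · push_neg at hc
      have hder : ∀ s : ℝ, -α ≤ deriv (tn n) s := by
        intro s
        have h5 : ((-(deriv (tn n) s) : ℝ) : EReal) ≤ (α : EReal) :=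
          le_trans (le_iSup (fun x => ((-(deriv (tn n) x) : ℝ) : EReal)) s) hc
        have := EReal.coe_le_coe_iff.1 h5
        linarith
      have hg : Monotone (fun s => tn n s + α * s) := by
        apply monotone_of_deriv_nonneg
        · exact (hdiffn n).add (differentiable_id.const_mul α)
        · intro s
          have hd : HasDerivAt (fun s => tn n s + α * s) (deriv (tn n) s + α) s := by
            have h := ((hdiffn n s).hasDerivAt).add ((hasDerivAt_id s).const_mul α)
            simp only [mul_one] at h
            exact h
          rw [hd.deriv]
          linarith [hder s]
      have h6 := hg hβ
      simp only [mul_zero, add_zero] at h6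
      have h7 := min_le_right 0 (tn n 0)
      linarith
  have hlb : ∀ β : ℝ, 0 ≤ β → min 0 ((t 0).toReal) - α * β ≤ (t β).toReal := by
    intro β hβ
    have hfβ : Tendsto (fun n => tn n β) atTop (nhds ((t β).toReal)) := by
      have h := hlim β
      rw [hreal β hβ] at h
      exact EReal.tendsto_coe.1 h
    have hf0 : Tendsto (fun n => tn n 0) atTop (nhds ((t 0).toReal)) := by
      have h := hlim 0
      rw [hreal 0 le_rfl] at h
      exact EReal.tendsto_coe.1 h
    have hg : Tendsto (fun n => min 0 (tn n 0) - α * β) atTop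
        (nhds (min 0 ((t 0).toReal) - α * β)) :=
      (tendsto_const_nhds.min hf0).sub tendsto_const_nhds
    exact freq_le_limit hfβ hg (hkey.mono fun n h => h β hβ)
  rw [← EReal.le_of_forall_lt_iff_le]
  intro c hc
  have hcα : α < c := by exact_mod_cast hc
  set T0 := (t 0).toReal with hT0
  set D := T0 - min 0 T0 with hDdef
  have hD0 : 0 ≤ D := sub_nonneg.2 (min_le_right 0 T0)
  set x := max 1 (D / (c - α)) with hxdef
  have hx1 : (0:ℝ) < x := lt_of_lt_of_le one_pos (le_max_left _ _)
  have hxmem : x ∈ interior (edom t) := hint hx1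
  have h3 : D ≤ (c - α) * x := by
    have hle : D / (c - α) ≤ x := le_max_right _ _
    calc D = (D / (c - α)) * (c - α) := (div_mul_cancel₀ _ (by linarith)).symm
    _ ≤ x * (c - α) := mul_le_mul_of_nonneg_right hle (by linarith)
    _ = (c - α) * x := mul_comm _ _
  have h2 := hlb x hx1.le
  have h4 : T0 - (t x).toReal ≤ c * x := by nlinarith
  have h5 : (T0 - (t x).toReal) / x ≤ c := (div_le_iff₀ hx1).2 h4
  have h1 := hD x hx1
  have h6 : -leftD t x ≤ (T0 - (t x).toReal) / x := by
    rw [show T0 - (t x).toReal = -((t x).toReal - T0) by ring, neg_div]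
    linarith
  refine le_trans (iInf₂_le x hxmem) ?_
  exact EReal.coe_le_coe_iff.2 (by linarith)
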